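/- There is no noncausal linear controller that strictly dominates all others: for any two distinct matrices Q, Q' (Youla parameters of two controllers), the difference of quadratic cost operators T_{K'}^T T_{K'} - T_K^T T_K, after conjugation by the orthogonal matrices θ and ψ, has zero (1,1) block, and hence cannot be positive definite. -/

import Mathlib

open Matrix

private lemma comm_inv_aux {n : ℕ} (S T F : Matrix (Fin n) (Fin n) ℝ) (hS : IsUnit S.det)
    (hT : IsUnit T.det) (h : F * T = S * F) : F * T⁻¹ = S⁻¹ * F := by
  calc F * T⁻¹ = S⁻¹ * S * (F * T⁻¹) := by rw [Matrix.nonsing_inv_mul _ hS, Matrix.one_mul]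
    _ = S⁻¹ * (S * F) * T⁻¹ := by noncomm_ring
    _ = S⁻¹ * (F * T) * T⁻¹ := by rw [h]
    _ = S⁻¹ * F * (T * T⁻¹) := by noncomm_ring
    _ = S⁻¹ * F := by rw [Matrix.mul_nonsing_inv _ hT, Matrix.mul_one]

theorem stmt_15 {n : ℕ} (hn : 0 < n) (F G L : Matrix (Fin n) (Fin n) ℝ)
    (hF : ∀ i j : Fin n, i ≤ j → F i j = 0) (hG : ∀ i j : Fin n, i ≤ j → G i j = 0)
    (hL : ∀ i j : Fin n, i ≤ j → L i j = 0)
    (Sih Tih Uih Vih : Matrix (Fin n) (Fin n) ℝ)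
    (hSih : Sih.PosDef) (hTih : Tih.PosDef) (hUih : Uih.PosDef) (hVih : Vih.PosDef)
    (hSih2 : Sih * Sih = (1 + F * Fᵀ)⁻¹) (hTih2 : Tih * Tih = (1 + Fᵀ * F)⁻¹)
    (hUih2 : Uih * Uih = (1 + L * Lᵀ)⁻¹) (hVih2 : Vih * Vih = (1 + Lᵀ * L)⁻¹)
    (Q Q' : Matrix (Fin n) (Fin n) ℝ) (hQQ' : Q ≠ Q')
    (θ ψ TK TK' D : Matrix (Fin n ⊕ Fin n) (Fin n ⊕ Fin n) ℝ)
    (hθ : θ = (Matrix.fromBlocks Sih 0 0 Tih) * (Matrix.fromBlocks 1 (-F) Fᵀ 1))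
    (hψ : ψ = (Matrix.fromBlocks 1 Lᵀ (-L) 1) * (Matrix.fromBlocks Vih 0 0 Uih))
    (hTK : TK = Matrix.fromBlocks (F * Q * L + G) (F * Q) (Q * L) Q)
    (hTK' : TK' = Matrix.fromBlocks (F * Q' * L + G) (F * Q') (Q' * L) Q')
    (hD : D = (θ * TK' * ψ)ᵀ * (θ * TK' * ψ) - (θ * TK * ψ)ᵀ * (θ * TK * ψ)) :
    Matrix.toBlocks₁₁ D = 0 ∧ ¬ D.PosDef ∧ ¬ (TK'ᵀ * TK' - TKᵀ * TK).PosDef := by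
  -- positive definiteness of the four Gram-type matrices
  have keyPD : ∀ A : Matrix (Fin n) (Fin n) ℝ, (1 + A * Aᵀ).PosDef := fun A => by
    have h := Matrix.posSemidef_self_mul_conjTranspose A
    rw [conjTranspose_eq_transpose_of_trivial] at h
    exact Matrix.PosDef.add_posSemidef Matrix.PosDef.one h
  have keyPD' : ∀ A : Matrix (Fin n) (Fin n) ℝ, (1 + Aᵀ * A).PosDef := fun A => by
    simpa using keyPD Aᵀ
  have hSd : IsUnit (1 + F * Fᵀ).det := (Matrix.isUnit_iff_isUnit_det _).mp (keyPD F).isUnit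
  have hTd : IsUnit (1 + Fᵀ * F).det := (Matrix.isUnit_iff_isUnit_det _).mp (keyPD' F).isUnit
  have hUd : IsUnit (1 + L * Lᵀ).det := (Matrix.isUnit_iff_isUnit_det _).mp (keyPD L).isUnit
  have hVd : IsUnit (1 + Lᵀ * L).det := (Matrix.isUnit_iff_isUnit_det _).mp (keyPD' L).isUnit
  -- commutation identities
  have hFc : F * (1 + Fᵀ * F)⁻¹ = (1 + F * Fᵀ)⁻¹ * F :=
    comm_inv_aux _ _ _ hSd hTd (by noncomm_ring)
  have hFc' : Fᵀ * (1 + F * Fᵀ)⁻¹ = (1 + Fᵀ * F)⁻¹ * Fᵀ :=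
    comm_inv_aux _ _ _ hTd hSd (by noncomm_ring)
  have hLc : Lᵀ * (1 + L * Lᵀ)⁻¹ = (1 + Lᵀ * L)⁻¹ * Lᵀ :=
    comm_inv_aux _ _ _ hVd hUd (by noncomm_ring)
  have hLc' : L * (1 + Lᵀ * L)⁻¹ = (1 + L * Lᵀ)⁻¹ * L :=
    comm_inv_aux _ _ _ hUd hVd (by noncomm_ring)
  -- symmetry of the square roots
  have hSs : Sihᵀ = Sih := by
    rw [← conjTranspose_eq_transpose_of_trivial]; exact hSih.isHermitian
  have hTs : Tihᵀ = Tih := by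
    rw [← conjTranspose_eq_transpose_of_trivial]; exact hTih.isHermitian
  have hUs : Uihᵀ = Uih := by
    rw [← conjTranspose_eq_transpose_of_trivial]; exact hUih.isHermitian
  have hVs : Vihᵀ = Vih := by
    rw [← conjTranspose_eq_transpose_of_trivial]; exact hVih.isHermitian
  -- θ is orthogonal : θᵀ * θ = 1
  have hθt : θᵀ = (Matrix.fromBlocks 1 F (-Fᵀ) 1) * (Matrix.fromBlocks Sih 0 0 Tih) := by
    rw [hθ, transpose_mul, fromBlocks_transpose, fromBlocks_transpose]
    simp [hSs, hTs]
  have hθθ : θᵀ * θ = 1 := by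
    rw [hθt, hθ]
    have hmid : (Matrix.fromBlocks Sih 0 0 Tih) *
        ((Matrix.fromBlocks Sih 0 0 Tih) * (Matrix.fromBlocks 1 (-F) Fᵀ 1))
        = Matrix.fromBlocks ((1 + F * Fᵀ)⁻¹) 0 0 ((1 + Fᵀ * F)⁻¹)
          * Matrix.fromBlocks 1 (-F) Fᵀ 1 := by
      rw [← Matrix.mul_assoc, fromBlocks_multiply]
      simp [hSih2, hTih2]
    rw [Matrix.mul_assoc, hmid, ← Matrix.mul_assoc, fromBlocks_multiply, fromBlocks_multiply,
      ← fromBlocks_one, fromBlocks_inj]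
    refine ⟨?_, ?_, ?_, ?_⟩
    · simp only [Matrix.one_mul, Matrix.mul_zero, Matrix.zero_mul, add_zero, zero_add,
        Matrix.mul_one]
      rw [hFc]
      calc (1 + F * Fᵀ)⁻¹ + (1 + F * Fᵀ)⁻¹ * F * Fᵀ = (1 + F * Fᵀ)⁻¹ * (1 + F * Fᵀ) := by
            noncomm_ring
        _ = 1 := Matrix.nonsing_inv_mul _ hSd
    · simp only [Matrix.one_mul, Matrix.mul_zero, Matrix.zero_mul, add_zero, zero_add,
        Matrix.mul_one, Matrix.mul_neg, Matrix.neg_mul]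
      rw [hFc]
      abel
    · simp only [Matrix.one_mul, Matrix.mul_zero, Matrix.zero_mul, add_zero, zero_add,
        Matrix.mul_one, Matrix.mul_neg, Matrix.neg_mul]
      rw [hFc']
      abel
    · simp only [Matrix.one_mul, Matrix.mul_zero, Matrix.zero_mul, add_zero, zero_add,
        Matrix.mul_one, Matrix.mul_neg, Matrix.neg_mul]
      rw [hFc']
      calc - -((1 + Fᵀ * F)⁻¹ * Fᵀ * F) + (1 + Fᵀ * F)⁻¹
          = (1 + Fᵀ * F)⁻¹ * (1 + Fᵀ * F) := by noncomm_ring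
        _ = 1 := Matrix.nonsing_inv_mul _ hTd
  -- ψ is orthogonal : ψ * ψᵀ = 1
  have hψt : ψᵀ = (Matrix.fromBlocks Vih 0 0 Uih) * (Matrix.fromBlocks 1 (-Lᵀ) L 1) := by
    rw [hψ, transpose_mul, fromBlocks_transpose, fromBlocks_transpose]
    simp [hUs, hVs]
  have hψψ : ψ * ψᵀ = 1 := by
    rw [hψt, hψ]
    have hmid : (Matrix.fromBlocks Vih 0 0 Uih) *
        ((Matrix.fromBlocks Vih 0 0 Uih) * (Matrix.fromBlocks 1 (-Lᵀ) L 1))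
        = Matrix.fromBlocks ((1 + Lᵀ * L)⁻¹) 0 0 ((1 + L * Lᵀ)⁻¹)
          * Matrix.fromBlocks 1 (-Lᵀ) L 1 := by
      rw [← Matrix.mul_assoc, fromBlocks_multiply]
      simp [hUih2, hVih2]
    rw [Matrix.mul_assoc, hmid, ← Matrix.mul_assoc, fromBlocks_multiply, fromBlocks_multiply,
      ← fromBlocks_one, fromBlocks_inj]
    refine ⟨?_, ?_, ?_, ?_⟩
    · simp only [Matrix.one_mul, Matrix.mul_zero, Matrix.zero_mul, add_zero, zero_add,
        Matrix.mul_one]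
      rw [hLc]
      calc (1 + Lᵀ * L)⁻¹ + (1 + Lᵀ * L)⁻¹ * Lᵀ * L = (1 + Lᵀ * L)⁻¹ * (1 + Lᵀ * L) := by
            noncomm_ring
        _ = 1 := Matrix.nonsing_inv_mul _ hVd
    · simp only [Matrix.one_mul, Matrix.mul_zero, Matrix.zero_mul, add_zero, zero_add,
        Matrix.mul_one, Matrix.mul_neg, Matrix.neg_mul]
      rw [hLc]
      abel
    · simp only [Matrix.one_mul, Matrix.mul_zero, Matrix.zero_mul, add_zero, zero_add,
        Matrix.mul_one, Matrix.mul_neg, Matrix.neg_mul]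
      rw [hLc']
      abel
    · simp only [Matrix.one_mul, Matrix.mul_zero, Matrix.zero_mul, add_zero, zero_add,
        Matrix.mul_one, Matrix.mul_neg, Matrix.neg_mul]
      rw [hLc']
      calc - -((1 + L * Lᵀ)⁻¹ * L * Lᵀ) + (1 + L * Lᵀ)⁻¹
          = (1 + L * Lᵀ)⁻¹ * (1 + L * Lᵀ) := by noncomm_ring
        _ = 1 := Matrix.nonsing_inv_mul _ hUd
  -- the conjugated transfer operator
  have hMid : ∀ R : Matrix (Fin n) (Fin n) ℝ,
      (Matrix.fromBlocks 1 (-F) Fᵀ 1) * (Matrix.fromBlocks (F * R * L + G) (F * R) (R * L) R)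
        * (Matrix.fromBlocks 1 Lᵀ (-L) 1)
      = Matrix.fromBlocks G (G * Lᵀ) (Fᵀ * G)
          (Fᵀ * G * Lᵀ + (1 + Fᵀ * F) * R * (1 + L * Lᵀ)) := by
    intro R
    rw [fromBlocks_multiply, fromBlocks_multiply, fromBlocks_inj]
    refine ⟨by noncomm_ring, by noncomm_ring, by noncomm_ring, by noncomm_ring⟩
  have hM : ∀ R : Matrix (Fin n) (Fin n) ℝ,
      θ * (Matrix.fromBlocks (F * R * L + G) (F * R) (R * L) R) * ψ
      = Matrix.fromBlocks (Sih * G * Vih) (Sih * (G * Lᵀ) * Uih) (Tih * (Fᵀ * G) * Vih)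
          (Tih * (Fᵀ * G * Lᵀ + (1 + Fᵀ * F) * R * (1 + L * Lᵀ)) * Uih) := by
    intro R
    rw [hθ, hψ]
    calc (Matrix.fromBlocks Sih 0 0 Tih) * (Matrix.fromBlocks 1 (-F) Fᵀ 1)
          * (Matrix.fromBlocks (F * R * L + G) (F * R) (R * L) R)
          * ((Matrix.fromBlocks 1 Lᵀ (-L) 1) * (Matrix.fromBlocks Vih 0 0 Uih))
        = (Matrix.fromBlocks Sih 0 0 Tih)
          * ((Matrix.fromBlocks 1 (-F) Fᵀ 1)
            * (Matrix.fromBlocks (F * R * L + G) (F * R) (R * L) R)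
            * (Matrix.fromBlocks 1 Lᵀ (-L) 1))
          * (Matrix.fromBlocks Vih 0 0 Uih) := by
          simp only [Matrix.mul_assoc]
      _ = _ := by
          rw [hMid R, fromBlocks_multiply, fromBlocks_multiply, fromBlocks_inj]
          refine ⟨by simp [Matrix.mul_assoc], by simp [Matrix.mul_assoc],
            by simp [Matrix.mul_assoc], by simp [Matrix.mul_assoc]⟩
  -- first claim
  have h1 : Matrix.toBlocks₁₁ D = 0 := by
    rw [hD, hTK, hTK', hM Q, hM Q']
    rw [fromBlocks_transpose, fromBlocks_transpose, fromBlocks_multiply, fromBlocks_multiply]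
    ext i j
    simp [toBlocks₁₁, Matrix.sub_apply]
  -- second claim
  have i0 : Fin n := ⟨0, hn⟩
  have h2 : ¬ D.PosDef := by
    intro h
    have hx : (Pi.single (Sum.inl i0) (1:ℝ) : Fin n ⊕ Fin n → ℝ) ≠ 0 := by
      intro hc
      have := congrFun hc (Sum.inl i0)
      simp at this
    have hpos := h.dotProduct_mulVec_pos hx
    have hz : D (Sum.inl i0) (Sum.inl i0) = 0 := by
      have := congrFun (congrFun h1 i0) i0
      simpa [toBlocks₁₁] using this
    rw [show (star (Pi.single (Sum.inl i0) (1:ℝ) : Fin n ⊕ Fin n → ℝ))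
        = Pi.single (Sum.inl i0) (1:ℝ) from rfl] at hpos
    rw [mulVec_single, single_dotProduct] at hpos
    simp [hz] at hpos
  refine ⟨h1, h2, ?_⟩
  -- third claim
  intro h
  apply h2
  have hψψ' : ψᵀ * ψ = 1 := mul_eq_one_comm.mp hψψ
  have keyc : ∀ X : Matrix (Fin n ⊕ Fin n) (Fin n ⊕ Fin n) ℝ,
      (θ * X * ψ)ᵀ * (θ * X * ψ) = ψᵀ * (Xᵀ * X) * ψ := fun X => by
    calc (θ * X * ψ)ᵀ * (θ * X * ψ) = ψᵀ * (Xᵀ * ((θᵀ * θ) * (X * ψ))) := by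
          simp only [transpose_mul, Matrix.mul_assoc]
      _ = ψᵀ * (Xᵀ * X) * ψ := by rw [hθθ]; simp only [Matrix.one_mul, Matrix.mul_assoc]
  have hDE : D = ψᵀ * (TK'ᵀ * TK' - TKᵀ * TK) * ψ := by
    rw [hD, keyc, keyc]
    noncomm_ring
  refine Matrix.PosDef.of_dotProduct_mulVec_pos ?_ ?_
  · have hher := Matrix.isHermitian_conjTranspose_mul_mul ψ h.1
    rw [conjTranspose_eq_transpose_of_trivial] at hher
    rw [hDE]
    exact hher
  · intro x hx
    have hy : ψ *ᵥ x ≠ 0 := by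
      intro hc
      apply hx
      calc x = (1 : Matrix (Fin n ⊕ Fin n) (Fin n ⊕ Fin n) ℝ) *ᵥ x := (Matrix.one_mulVec x).symm
        _ = (ψᵀ * ψ) *ᵥ x := by rw [hψψ']
        _ = ψᵀ *ᵥ (ψ *ᵥ x) := by rw [← Matrix.mulVec_mulVec]
        _ = 0 := by rw [hc, Matrix.mulVec_zero]
    have hpos := h.dotProduct_mulVec_pos hy
    rw [hDE, ← Matrix.mulVec_mulVec, ← Matrix.mulVec_mulVec, Matrix.dotProduct_mulVec,
      Matrix.vecMul_transpose]
    have hst : ∀ v : (Fin n ⊕ Fin n) → ℝ, star v = v := fun v => funext fun i => rfl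
    rw [hst] at hpos ⊢
    exact hpos
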